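/- Let 𝒴 ⊂ ℝ be a finite set, let 𝒜, 𝒢₁, 𝒢₂, ℬ₂ be finite types, let p be a strictly positive probability mass function on 𝒴 × 𝒜 × 𝒢₁ × 𝒢₂ × ℬ₂, and fix a ∈ 𝒜. If G₂ ⊥ (A, G₁) | B₂ under p, then Var_p( ψ_a^{G₁,B₂}(Y,A,G₁,B₂) ) = Var_p( ψ_a^{G₁,(G₂,B₂)}(Y,A,G₁,G₂,B₂) ) + Var_p( ψ_a^{G₁,B₂}(Y,A,G₁,B₂) − ψ_a^{G₁,(G₂,B₂)}(Y,A,G₁,G₂,B₂) ); in particular, Var_p( ψ_a^{G₁,B₂} ) ≥ Var_p( ψ_a^{G₁,(G₂,B₂)} ). -/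

import Mathlib

open Finset

noncomputable section

variable {Y : Finset ℝ} {A G₁ G₂ B₂ : Type}
variable [Fintype A] [Fintype G₁] [Fintype G₂] [Fintype B₂] [DecidableEq A]

/-- Marginal `p(g₁)`. -/
def pG1 (p : Y × A × G₁ × G₂ × B₂ → ℝ) (g₁ : G₁) : ℝ :=
  ∑ y : Y, ∑ a : A, ∑ g₂ : G₂, ∑ b₂ : B₂, p (y, a, g₁, g₂, b₂)

/-- Marginal `p(g₂)`. -/
def pG2 (p : Y × A × G₁ × G₂ × B₂ → ℝ) (g₂ : G₂) : ℝ :=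
  ∑ y : Y, ∑ a : A, ∑ g₁ : G₁, ∑ b₂ : B₂, p (y, a, g₁, g₂, b₂)

/-- Marginal `p(b₂)`. -/
def pB2 (p : Y × A × G₁ × G₂ × B₂ → ℝ) (b₂ : B₂) : ℝ :=
  ∑ y : Y, ∑ a : A, ∑ g₁ : G₁, ∑ g₂ : G₂, p (y, a, g₁, g₂, b₂)

/-- Marginal `p(g₂, b₂)`. -/
def pG2B2 (p : Y × A × G₁ × G₂ × B₂ → ℝ) (g₂ : G₂) (b₂ : B₂) : ℝ :=
  ∑ y : Y, ∑ a : A, ∑ g₁ : G₁, p (y, a, g₁, g₂, b₂)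

/-- Marginal `p(a, g₁, b₂)`. -/
def pAG1B2 (p : Y × A × G₁ × G₂ × B₂ → ℝ) (a : A) (g₁ : G₁) (b₂ : B₂) : ℝ :=
  ∑ y : Y, ∑ g₂ : G₂, p (y, a, g₁, g₂, b₂)

/-- Marginal `p(a, g₁, g₂, b₂)`. -/
def pAG1G2B2 (p : Y × A × G₁ × G₂ × B₂ → ℝ) (a : A) (g₁ : G₁) (g₂ : G₂) (b₂ : B₂) : ℝ :=
  ∑ y : Y, p (y, a, g₁, g₂, b₂)

/-- Marginal `p(a, g₁, g₂)`. -/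
def pAG1G2 (p : Y × A × G₁ × G₂ × B₂ → ℝ) (a : A) (g₁ : G₁) (g₂ : G₂) : ℝ :=
  ∑ y : Y, ∑ b₂ : B₂, p (y, a, g₁, g₂, b₂)

/-- Outcome regression `m₁(g₁,b₂) = ∑_y y·p(y | a, g₁, b₂)` for the
adjustment set `(G₁, B₂)`. -/
def m1 (p : Y × A × G₁ × G₂ × B₂ → ℝ) (a : A) (g₁ : G₁) (b₂ : B₂) : ℝ :=
  ∑ y : Y, (y : ℝ) * ((∑ g₂ : G₂, p (y, a, g₁, g₂, b₂)) / pAG1B2 p a g₁ b₂)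

/-- Outcome regression `m₂(g₁,g₂,b₂) = ∑_y y·p(y | a, g₁, g₂, b₂)` for the
adjustment set `(G₁, (G₂, B₂))`. -/
def m2 (p : Y × A × G₁ × G₂ × B₂ → ℝ) (a : A) (g₁ : G₁) (g₂ : G₂) (b₂ : B₂) : ℝ :=
  ∑ y : Y, (y : ℝ) * (p (y, a, g₁, g₂, b₂) / pAG1G2B2 p a g₁ g₂ b₂)

/-- Outcome regression `m₃(g₁,g₂) = ∑_y y·p(y | a, g₁, g₂)` for the
adjustment set `(G₁, G₂)`. -/
def m3 (p : Y × A × G₁ × G₂ × B₂ → ℝ) (a : A) (g₁ : G₁) (g₂ : G₂) : ℝ :=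
  ∑ y : Y, (y : ℝ) * ((∑ b₂ : B₂, p (y, a, g₁, g₂, b₂)) / pAG1G2 p a g₁ g₂)

/-- Target parameter for the adjustment set `(G₁, B₂)`. -/
def T1 (p : Y × A × G₁ × G₂ × B₂ → ℝ) (a : A) : ℝ :=
  ∑ g₁ : G₁, pG1 p g₁ * ∑ b₂ : B₂, pB2 p b₂ * m1 p a g₁ b₂

/-- Target parameter for the adjustment set `(G₁, (G₂, B₂))`. -/
def T2 (p : Y × A × G₁ × G₂ × B₂ → ℝ) (a : A) : ℝ :=
  ∑ g₁ : G₁, pG1 p g₁ * ∑ g₂ : G₂, ∑ b₂ : B₂, pG2B2 p g₂ b₂ * m2 p a g₁ g₂ b₂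

/-- Target parameter for the adjustment set `(G₁, G₂)`. -/
def T3 (p : Y × A × G₁ × G₂ × B₂ → ℝ) (a : A) : ℝ :=
  ∑ g₁ : G₁, pG1 p g₁ * ∑ g₂ : G₂, pG2 p g₂ * m3 p a g₁ g₂

/-- Influence function `ψ_a^{G₁,B₂}` for the adjustment set `(G₁, B₂)`. -/
def psi1 (p : Y × A × G₁ × G₂ × B₂ → ℝ) (a : A)
    (y : Y) (a' : A) (g₁ : G₁) (b₂ : B₂) : ℝ :=
  (if a' = a then (1 : ℝ) else 0) * (pG1 p g₁ * pB2 p b₂ / pAG1B2 p a g₁ b₂) *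
      ((y : ℝ) - m1 p a g₁ b₂)
    + (∑ b₂' : B₂, pB2 p b₂' * m1 p a g₁ b₂')
    + (∑ g₁' : G₁, pG1 p g₁' * m1 p a g₁' b₂)
    - 2 * T1 p a

/-- Influence function `ψ_a^{G₁,(G₂,B₂)}` for the adjustment set `(G₁, (G₂, B₂))`. -/
def psi2 (p : Y × A × G₁ × G₂ × B₂ → ℝ) (a : A)
    (y : Y) (a' : A) (g₁ : G₁) (g₂ : G₂) (b₂ : B₂) : ℝ :=
  (if a' = a then (1 : ℝ) else 0) *
      (pG1 p g₁ * pG2B2 p g₂ b₂ / pAG1G2B2 p a g₁ g₂ b₂) *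
      ((y : ℝ) - m2 p a g₁ g₂ b₂)
    + (∑ g₂' : G₂, ∑ b₂' : B₂, pG2B2 p g₂' b₂' * m2 p a g₁ g₂' b₂')
    + (∑ g₁' : G₁, pG1 p g₁' * m2 p a g₁' g₂ b₂)
    - 2 * T2 p a

/-- Influence function `ψ_a^{G₁,G₂}` for the adjustment set `(G₁, G₂)`. -/
def psi3 (p : Y × A × G₁ × G₂ × B₂ → ℝ) (a : A)
    (y : Y) (a' : A) (g₁ : G₁) (g₂ : G₂) : ℝ :=
  (if a' = a then (1 : ℝ) else 0) * (pG1 p g₁ * pG2 p g₂ / pAG1G2 p a g₁ g₂) *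
      ((y : ℝ) - m3 p a g₁ g₂)
    + (∑ g₂' : G₂, pG2 p g₂' * m3 p a g₁ g₂')
    + (∑ g₁' : G₁, pG1 p g₁' * m3 p a g₁' g₂)
    - 2 * T3 p a

/-- Conditional independence `G₂ ⊥ (A, G₁) | B₂` under `p`. -/
def CI_G2_AG1_B2 (p : Y × A × G₁ × G₂ × B₂ → ℝ) : Prop :=
  ∀ (g₂ : G₂) (a : A) (g₁ : G₁) (b₂ : B₂),
    (∑ y : Y, p (y, a, g₁, g₂, b₂)) / pB2 p b₂ =
      (pG2B2 p g₂ b₂ / pB2 p b₂) * (pAG1B2 p a g₁ b₂ / pB2 p b₂)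

/-- Conditional independence `Y ⊥ B₂ | (A, G₁, G₂)` under `p`. -/
def CI_Y_B2_AG1G2 (p : Y × A × G₁ × G₂ × B₂ → ℝ) : Prop :=
  ∀ (y : Y) (a : A) (g₁ : G₁) (g₂ : G₂) (b₂ : B₂),
    p (y, a, g₁, g₂, b₂) / pAG1G2 p a g₁ g₂ =
      ((∑ b₂' : B₂, p (y, a, g₁, g₂, b₂')) / pAG1G2 p a g₁ g₂) *
        (pAG1G2B2 p a g₁ g₂ b₂ / pAG1G2 p a g₁ g₂)

/-- Variance of a real function of the observation under `p`. -/
def VarP (p : Y × A × G₁ × G₂ × B₂ → ℝ) (f : Y × A × G₁ × G₂ × B₂ → ℝ) : ℝ :=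
  (∑ o : Y × A × G₁ × G₂ × B₂, p o * f o ^ 2) -
    (∑ o : Y × A × G₁ × G₂ × B₂, p o * f o) ^ 2

set_option linter.unusedSectionVars false
section AuxVDSB

variable [Nonempty Y] [Nonempty A] [Nonempty G₁] [Nonempty G₂] [Nonempty B₂]

/-! ### Generic reorderings of iterated sums -/

private lemma sum_rot3 {α β γ : Type*} [Fintype α] [Fintype β] [Fintype γ] (f : α → β → γ → ℝ) :
    ∑ x : α, ∑ y : β, ∑ z : γ, f x y z = ∑ y : β, ∑ z : γ, ∑ x : α, f x y z := by
  have h1 : (∑ o : α × β × γ, f o.1 o.2.1 o.2.2) = ∑ x : α, ∑ y : β, ∑ z : γ, f x y z := by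
    simp only [Fintype.sum_prod_type]
  have h2 : (∑ o : β × γ × α, f o.2.2 o.1 o.2.1) = ∑ y : β, ∑ z : γ, ∑ x : α, f x y z := by
    simp only [Fintype.sum_prod_type]
  rw [← h1, ← h2]
  exact Fintype.sum_equiv ⟨fun o => (o.2.1, o.2.2, o.1), fun o => (o.2.2, o.1, o.2.1),
    fun _ => rfl, fun _ => rfl⟩ _ _ (fun _ => rfl)

private lemma sum_rev3 {α β γ : Type*} [Fintype α] [Fintype β] [Fintype γ] (f : α → β → γ → ℝ) :
    ∑ x : α, ∑ y : β, ∑ z : γ, f x y z = ∑ z : γ, ∑ y : β, ∑ x : α, f x y z := by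
  have h1 : (∑ o : α × β × γ, f o.1 o.2.1 o.2.2) = ∑ x : α, ∑ y : β, ∑ z : γ, f x y z := by
    simp only [Fintype.sum_prod_type]
  have h2 : (∑ o : γ × β × α, f o.2.2 o.2.1 o.1) = ∑ z : γ, ∑ y : β, ∑ x : α, f x y z := by
    simp only [Fintype.sum_prod_type]
  rw [← h1, ← h2]
  exact Fintype.sum_equiv ⟨fun o => (o.2.2, o.2.1, o.1), fun o => (o.2.2, o.2.1, o.1),
    fun _ => rfl, fun _ => rfl⟩ _ _ (fun _ => rfl)

private lemma sum_rot4 {α β γ δ : Type*} [Fintype α] [Fintype β] [Fintype γ] [Fintype δ]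
    (f : α → β → γ → δ → ℝ) :
    ∑ x : α, ∑ y : β, ∑ z : γ, ∑ w : δ, f x y z w
      = ∑ y : β, ∑ z : γ, ∑ w : δ, ∑ x : α, f x y z w := by
  have h1 : (∑ o : α × β × γ × δ, f o.1 o.2.1 o.2.2.1 o.2.2.2)
      = ∑ x : α, ∑ y : β, ∑ z : γ, ∑ w : δ, f x y z w := by
    simp only [Fintype.sum_prod_type]
  have h2 : (∑ o : β × γ × δ × α, f o.2.2.2 o.1 o.2.1 o.2.2.1)
      = ∑ y : β, ∑ z : γ, ∑ w : δ, ∑ x : α, f x y z w := by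
    simp only [Fintype.sum_prod_type]
  rw [← h1, ← h2]
  exact Fintype.sum_equiv ⟨fun o => (o.2.1, o.2.2.1, o.2.2.2, o.1),
    fun o => (o.2.2.2, o.1, o.2.1, o.2.2.1), fun _ => rfl, fun _ => rfl⟩ _ _ (fun _ => rfl)

private lemma sum_swap13 {α β γ δ : Type*} [Fintype α] [Fintype β] [Fintype γ] [Fintype δ]
    (f : α → β → γ → δ → ℝ) :
    ∑ x : α, ∑ y : β, ∑ z : γ, ∑ w : δ, f x y z w
      = ∑ z : γ, ∑ y : β, ∑ x : α, ∑ w : δ, f x y z w := by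
  have h1 : (∑ o : α × β × γ × δ, f o.1 o.2.1 o.2.2.1 o.2.2.2)
      = ∑ x : α, ∑ y : β, ∑ z : γ, ∑ w : δ, f x y z w := by
    simp only [Fintype.sum_prod_type]
  have h2 : (∑ o : γ × β × α × δ, f o.2.2.1 o.2.1 o.1 o.2.2.2)
      = ∑ z : γ, ∑ y : β, ∑ x : α, ∑ w : δ, f x y z w := by
    simp only [Fintype.sum_prod_type]
  rw [← h1, ← h2]
  exact Fintype.sum_equiv ⟨fun o => (o.2.2.1, o.2.1, o.1, o.2.2.2),
    fun o => (o.2.2.1, o.2.1, o.1, o.2.2.2), fun _ => rfl, fun _ => rfl⟩ _ _ (fun _ => rfl)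

private lemma sum_pairs4 {α β γ δ : Type*} [Fintype α] [Fintype β] [Fintype γ] [Fintype δ]
    (f : α → β → γ → δ → ℝ) :
    ∑ x : α, ∑ y : β, ∑ z : γ, ∑ w : δ, f x y z w
      = ∑ z : γ, ∑ w : δ, ∑ x : α, ∑ y : β, f x y z w := by
  have h1 : (∑ o : α × β × γ × δ, f o.1 o.2.1 o.2.2.1 o.2.2.2)
      = ∑ x : α, ∑ y : β, ∑ z : γ, ∑ w : δ, f x y z w := by
    simp only [Fintype.sum_prod_type]
  have h2 : (∑ o : γ × δ × α × β, f o.2.2.1 o.2.2.2 o.1 o.2.1)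
      = ∑ z : γ, ∑ w : δ, ∑ x : α, ∑ y : β, f x y z w := by
    simp only [Fintype.sum_prod_type]
  rw [← h1, ← h2]
  exact Fintype.sum_equiv ⟨fun o => (o.2.2.1, o.2.2.2, o.1, o.2.1),
    fun o => (o.2.2.1, o.2.2.2, o.1, o.2.1), fun _ => rfl, fun _ => rfl⟩ _ _ (fun _ => rfl)

private lemma sum_reorder5 (f : Y → A → G₁ → G₂ → B₂ → ℝ) :
    (∑ y : Y, ∑ a' : A, ∑ g₁ : G₁, ∑ g₂ : G₂, ∑ b₂ : B₂, f y a' g₁ g₂ b₂)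
      = ∑ g₁ : G₁, ∑ g₂ : G₂, ∑ b₂ : B₂, ∑ y : Y, ∑ a' : A, f y a' g₁ g₂ b₂ := by
  have h1 : (∑ o : Y × A × G₁ × G₂ × B₂, f o.1 o.2.1 o.2.2.1 o.2.2.2.1 o.2.2.2.2)
      = ∑ y : Y, ∑ a' : A, ∑ g₁ : G₁, ∑ g₂ : G₂, ∑ b₂ : B₂, f y a' g₁ g₂ b₂ := by
    simp only [Fintype.sum_prod_type]
  have h2 : (∑ o : G₁ × G₂ × B₂ × Y × A, f o.2.2.2.1 o.2.2.2.2 o.1 o.2.1 o.2.2.1)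
      = ∑ g₁ : G₁, ∑ g₂ : G₂, ∑ b₂ : B₂, ∑ y : Y, ∑ a' : A, f y a' g₁ g₂ b₂ := by
    simp only [Fintype.sum_prod_type]
  rw [← h1, ← h2]
  exact Fintype.sum_equiv
    ⟨fun o => (o.2.2.1, o.2.2.2.1, o.2.2.2.2, o.1, o.2.1),
     fun o => (o.2.2.2.1, o.2.2.2.2, o.1, o.2.1, o.2.2.1),
     fun _ => rfl, fun _ => rfl⟩ _ _ (fun _ => rfl)


variable (p : Y × A × G₁ × G₂ × B₂ → ℝ)

/-- Joint marginal `p(g₁,g₂,b₂)`. -/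
def pJm (g₁ : G₁) (g₂ : G₂) (b₂ : B₂) : ℝ := ∑ y : Y, ∑ a' : A, p (y, a', g₁, g₂, b₂)

/-- Marginal `p(g₁,b₂)`. -/
def pG1B2m (g₁ : G₁) (b₂ : B₂) : ℝ := ∑ a' : A, pAG1B2 p a' g₁ b₂

/-- `∑_{g₂',b₂'} p(g₂',b₂') m₂(g₁,g₂',b₂')`. -/
def ccf (a : A) (g₁ : G₁) : ℝ := ∑ g₂' : G₂, ∑ b₂' : B₂, pG2B2 p g₂' b₂' * m2 p a g₁ g₂' b₂'

/-- `∑_{g₁'} p(g₁') m₂(g₁',g₂,b₂)`. -/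
def ddf (a : A) (g₂ : G₂) (b₂ : B₂) : ℝ := ∑ g₁' : G₁, pG1 p g₁' * m2 p a g₁' g₂ b₂

/-- `∑_{g₁'} p(g₁') (m₁(g₁',b₂) - m₂(g₁',g₂,b₂))`. -/
def Ddf (a : A) (g₂ : G₂) (b₂ : B₂) : ℝ :=
  ∑ g₁' : G₁, pG1 p g₁' * (m1 p a g₁' b₂ - m2 p a g₁' g₂ b₂)

/-! ### Positivity of marginals -/

lemma pAG1G2B2_pos (hpos : ∀ o, 0 < p o) (a : A) (g₁ : G₁) (g₂ : G₂) (b₂ : B₂) :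
    0 < pAG1G2B2 p a g₁ g₂ b₂ :=
  Finset.sum_pos (fun _ _ => hpos _) univ_nonempty

lemma pAG1B2_pos (hpos : ∀ o, 0 < p o) (a : A) (g₁ : G₁) (b₂ : B₂) :
    0 < pAG1B2 p a g₁ b₂ :=
  Finset.sum_pos (fun _ _ => Finset.sum_pos (fun _ _ => hpos _) univ_nonempty) univ_nonempty

lemma pG2B2_pos (hpos : ∀ o, 0 < p o) (g₂ : G₂) (b₂ : B₂) : 0 < pG2B2 p g₂ b₂ :=
  Finset.sum_pos (fun _ _ => Finset.sum_pos (fun _ _ =>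
    Finset.sum_pos (fun _ _ => hpos _) univ_nonempty) univ_nonempty) univ_nonempty

lemma pB2_pos (hpos : ∀ o, 0 < p o) (b₂ : B₂) : 0 < pB2 p b₂ :=
  Finset.sum_pos (fun _ _ => Finset.sum_pos (fun _ _ => Finset.sum_pos (fun _ _ =>
    Finset.sum_pos (fun _ _ => hpos _) univ_nonempty) univ_nonempty) univ_nonempty) univ_nonempty

lemma pG1_pos (hpos : ∀ o, 0 < p o) (g₁ : G₁) : 0 < pG1 p g₁ :=
  Finset.sum_pos (fun _ _ => Finset.sum_pos (fun _ _ => Finset.sum_pos (fun _ _ =>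
    Finset.sum_pos (fun _ _ => hpos _) univ_nonempty) univ_nonempty) univ_nonempty) univ_nonempty

/-! ### Basic sum identities -/

lemma sum_y_m2 (hpos : ∀ o, 0 < p o) (a : A) (g₁ : G₁) (g₂ : G₂) (b₂ : B₂) :
    ∑ y : Y, (y : ℝ) * p (y, a, g₁, g₂, b₂) = m2 p a g₁ g₂ b₂ * pAG1G2B2 p a g₁ g₂ b₂ := by
  have hq := (pAG1G2B2_pos p hpos a g₁ g₂ b₂).ne'
  unfold m2
  rw [Finset.sum_mul]
  exact (Finset.sum_congr rfl fun y _ => by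
    rw [mul_assoc, div_mul_cancel₀ _ hq]).symm

lemma hCI_mul (hpos : ∀ o, 0 < p o) (hCI : CI_G2_AG1_B2 p)
    (a : A) (g₁ : G₁) (g₂ : G₂) (b₂ : B₂) :
    pAG1G2B2 p a g₁ g₂ b₂ * pB2 p b₂ = pG2B2 p g₂ b₂ * pAG1B2 p a g₁ b₂ := by
  have hb := (pB2_pos p hpos b₂).ne'
  have h := hCI g₂ a g₁ b₂
  have h2 : (∑ y : Y, p (y, a, g₁, g₂, b₂)) = pAG1G2B2 p a g₁ g₂ b₂ := rfl
  rw [h2] at h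
  field_simp at h
  have := mul_right_cancel₀ hb (by rw [h] : pAG1G2B2 p a g₁ g₂ b₂ * pB2 p b₂ * pB2 p b₂ = pG2B2 p g₂ b₂ * pAG1B2 p a g₁ b₂ * pB2 p b₂)
  exact this

lemma sum_g2_pAG1G2B2 (a : A) (g₁ : G₁) (b₂ : B₂) :
    ∑ g₂ : G₂, pAG1G2B2 p a g₁ g₂ b₂ = pAG1B2 p a g₁ b₂ := by
  unfold pAG1G2B2 pAG1B2
  exact Finset.sum_comm

lemma sum_g2_pG2B2 (b₂ : B₂) : ∑ g₂ : G₂, pG2B2 p g₂ b₂ = pB2 p b₂ := by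
  unfold pG2B2 pB2
  exact sum_rot4 (fun g₂ y a g₁ => p (y, a, g₁, g₂, b₂))

lemma sum_g1_pG1B2m (b₂ : B₂) : ∑ g₁ : G₁, pG1B2m p g₁ b₂ = pB2 p b₂ := by
  unfold pG1B2m pAG1B2 pB2
  exact sum_swap13 (fun g₁ a y g₂ => p (y, a, g₁, g₂, b₂))

lemma sum_g1_pJm (g₂ : G₂) (b₂ : B₂) : ∑ g₁ : G₁, pJm p g₁ g₂ b₂ = pG2B2 p g₂ b₂ := by
  unfold pJm pG2B2
  exact sum_rot3 (fun g₁ y a => p (y, a, g₁, g₂, b₂))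

lemma sum_g2b2_pJm (g₁ : G₁) : ∑ g₂ : G₂, ∑ b₂ : B₂, pJm p g₁ g₂ b₂ = pG1 p g₁ := by
  unfold pJm pG1
  exact sum_pairs4 (fun g₂ b₂ y a => p (y, a, g₁, g₂, b₂))

lemma pJm_CI (hpos : ∀ o, 0 < p o) (hCI : CI_G2_AG1_B2 p) (g₁ : G₁) (g₂ : G₂) (b₂ : B₂) :
    pJm p g₁ g₂ b₂ * pB2 p b₂ = pG2B2 p g₂ b₂ * pG1B2m p g₁ b₂ := by
  have h1 : pJm p g₁ g₂ b₂ = ∑ a' : A, pAG1G2B2 p a' g₁ g₂ b₂ := Finset.sum_comm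
  rw [h1, Finset.sum_mul, pG1B2m, Finset.mul_sum]
  exact Finset.sum_congr rfl fun a' _ => hCI_mul p hpos hCI a' g₁ g₂ b₂

lemma m1_mul (hpos : ∀ o, 0 < p o) (a : A) (g₁ : G₁) (b₂ : B₂) :
    pAG1B2 p a g₁ b₂ * m1 p a g₁ b₂
      = ∑ g₂ : G₂, pAG1G2B2 p a g₁ g₂ b₂ * m2 p a g₁ g₂ b₂ := by
  have hA := (pAG1B2_pos p hpos a g₁ b₂).ne'
  have h1 : pAG1B2 p a g₁ b₂ * m1 p a g₁ b₂
      = ∑ y : Y, (y : ℝ) * (∑ g₂ : G₂, p (y, a, g₁, g₂, b₂)) := by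
    unfold m1
    rw [Finset.mul_sum]
    refine Finset.sum_congr rfl fun y _ => ?_
    field_simp
  have h2 : ∀ g₂ : G₂, pAG1G2B2 p a g₁ g₂ b₂ * m2 p a g₁ g₂ b₂
      = ∑ y : Y, (y : ℝ) * p (y, a, g₁, g₂, b₂) := fun g₂ => by
    rw [mul_comm]
    exact (sum_y_m2 p hpos a g₁ g₂ b₂).symm
  rw [h1]
  simp only [h2, Finset.mul_sum]
  exact Finset.sum_comm

lemma m1_pB2 (hpos : ∀ o, 0 < p o) (hCI : CI_G2_AG1_B2 p) (a : A) (g₁ : G₁) (b₂ : B₂) :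
    pB2 p b₂ * m1 p a g₁ b₂ = ∑ g₂ : G₂, pG2B2 p g₂ b₂ * m2 p a g₁ g₂ b₂ := by
  have hA := (pAG1B2_pos p hpos a g₁ b₂).ne'
  refine mul_left_cancel₀ hA ?_
  calc pAG1B2 p a g₁ b₂ * (pB2 p b₂ * m1 p a g₁ b₂)
      = pB2 p b₂ * (pAG1B2 p a g₁ b₂ * m1 p a g₁ b₂) := by ring
    _ = pB2 p b₂ * ∑ g₂ : G₂, pAG1G2B2 p a g₁ g₂ b₂ * m2 p a g₁ g₂ b₂ := by
        rw [m1_mul p hpos a g₁ b₂]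
    _ = ∑ g₂ : G₂, pB2 p b₂ * (pAG1G2B2 p a g₁ g₂ b₂ * m2 p a g₁ g₂ b₂) := by
        rw [Finset.mul_sum]
    _ = ∑ g₂ : G₂, pAG1B2 p a g₁ b₂ * (pG2B2 p g₂ b₂ * m2 p a g₁ g₂ b₂) := by
        refine Finset.sum_congr rfl fun g₂ _ => ?_
        linear_combination m2 p a g₁ g₂ b₂ * hCI_mul p hpos hCI a g₁ g₂ b₂
    _ = pAG1B2 p a g₁ b₂ * ∑ g₂ : G₂, pG2B2 p g₂ b₂ * m2 p a g₁ g₂ b₂ := by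
        rw [Finset.mul_sum]

lemma ccf_eq (hpos : ∀ o, 0 < p o) (hCI : CI_G2_AG1_B2 p) (a : A) (g₁ : G₁) :
    (∑ b₂' : B₂, pB2 p b₂' * m1 p a g₁ b₂') = ccf p a g₁ := by
  unfold ccf
  rw [Finset.sum_comm]
  exact Finset.sum_congr rfl fun b₂' _ => m1_pB2 p hpos hCI a g₁ b₂'

lemma T1_eq_T2 (hpos : ∀ o, 0 < p o) (hCI : CI_G2_AG1_B2 p) (a : A) :
    T1 p a = T2 p a := by
  unfold T1 T2
  refine Finset.sum_congr rfl fun g₁ _ => ?_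
  rw [ccf_eq p hpos hCI a g₁]
  rfl

lemma Ddf_eq (a : A) (g₂ : G₂) (b₂ : B₂) :
    Ddf p a g₂ b₂
      = (∑ g₁' : G₁, pG1 p g₁' * m1 p a g₁' b₂) - ∑ g₁' : G₁, pG1 p g₁' * m2 p a g₁' g₂ b₂ := by
  unfold Ddf
  rw [← Finset.sum_sub_distrib]
  exact Finset.sum_congr rfl fun g₁' _ => mul_sub _ _ _

lemma w_eq (hpos : ∀ o, 0 < p o) (hCI : CI_G2_AG1_B2 p)
    (a : A) (g₁ : G₁) (g₂ : G₂) (b₂ : B₂) :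
    pG1 p g₁ * pG2B2 p g₂ b₂ / pAG1G2B2 p a g₁ g₂ b₂
      = pG1 p g₁ * pB2 p b₂ / pAG1B2 p a g₁ b₂ := by
  rw [div_eq_div_iff (pAG1G2B2_pos p hpos a g₁ g₂ b₂).ne' (pAG1B2_pos p hpos a g₁ b₂).ne']
  linear_combination pG1 p g₁ * (hCI_mul p hpos hCI a g₁ g₂ b₂).symm

lemma psi_diff (hpos : ∀ o, 0 < p o) (hCI : CI_G2_AG1_B2 p)
    (a : A) (y : Y) (a' : A) (g₁ : G₁) (g₂ : G₂) (b₂ : B₂) :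
    psi1 p a y a' g₁ b₂ - psi2 p a y a' g₁ g₂ b₂
      = (if a' = a then (1 : ℝ) else 0)
          * (pG1 p g₁ * pG2B2 p g₂ b₂ / pAG1G2B2 p a g₁ g₂ b₂)
          * (m2 p a g₁ g₂ b₂ - m1 p a g₁ b₂)
        + Ddf p a g₂ b₂ := by
  have hw := w_eq p hpos hCI a g₁ g₂ b₂
  have hb := ccf_eq p hpos hCI a g₁
  have hT := T1_eq_T2 p hpos hCI a
  have hD := Ddf_eq p a g₂ b₂
  unfold psi1 psi2 at *
  unfold ccf at hb
  rw [hw, hb, hD, hT]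
  ring

/-! ### Expectation lemmas -/

lemma E_collapse (a : A) (F : Y × A × G₁ × G₂ × B₂ → ℝ) :
    ∑ o : Y × A × G₁ × G₂ × B₂, (if o.2.1 = a then (1 : ℝ) else 0) * F o
      = ∑ y : Y, ∑ g₁ : G₁, ∑ g₂ : G₂, ∑ b₂ : B₂, F (y, a, g₁, g₂, b₂) := by
  simp only [Fintype.sum_prod_type]
  refine Finset.sum_congr rfl fun y _ => ?_
  calc ∑ a' : A, ∑ g₁ : G₁, ∑ g₂ : G₂, ∑ b₂ : B₂,
          (if a' = a then (1 : ℝ) else 0) * F (y, a', g₁, g₂, b₂)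
      = ∑ a' : A, (if a' = a then (1 : ℝ) else 0)
          * ∑ g₁ : G₁, ∑ g₂ : G₂, ∑ b₂ : B₂, F (y, a', g₁, g₂, b₂) :=
        Finset.sum_congr rfl fun a' _ => by simp only [Finset.mul_sum]
    _ = ∑ g₁ : G₁, ∑ g₂ : G₂, ∑ b₂ : B₂, F (y, a, g₁, g₂, b₂) := by
        simp only [ite_mul, one_mul, zero_mul, Finset.sum_ite_eq', Finset.mem_univ, if_true]

lemma E_ind_y (hpos : ∀ o, 0 < p o) (a : A) (h : G₁ → G₂ → B₂ → ℝ) :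
    ∑ o : Y × A × G₁ × G₂ × B₂, (if o.2.1 = a then (1 : ℝ) else 0)
        * (p o * (h o.2.2.1 o.2.2.2.1 o.2.2.2.2
            * ((o.1 : ℝ) - m2 p a o.2.2.1 o.2.2.2.1 o.2.2.2.2))) = 0 := by
  rw [E_collapse, sum_rot4]
  dsimp only
  refine Finset.sum_eq_zero fun g₁ _ => Finset.sum_eq_zero fun g₂ _ =>
    Finset.sum_eq_zero fun b₂ _ => ?_
  calc ∑ y : Y, p (y, a, g₁, g₂, b₂) * (h g₁ g₂ b₂ * ((y : ℝ) - m2 p a g₁ g₂ b₂))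
      = ∑ y : Y, (h g₁ g₂ b₂ * ((y : ℝ) * p (y, a, g₁, g₂, b₂))
          - h g₁ g₂ b₂ * m2 p a g₁ g₂ b₂ * p (y, a, g₁, g₂, b₂)) :=
        Finset.sum_congr rfl fun y _ => by ring
    _ = (∑ y : Y, h g₁ g₂ b₂ * ((y : ℝ) * p (y, a, g₁, g₂, b₂)))
          - ∑ y : Y, h g₁ g₂ b₂ * m2 p a g₁ g₂ b₂ * p (y, a, g₁, g₂, b₂) :=
        Finset.sum_sub_distrib _ _
    _ = h g₁ g₂ b₂ * (∑ y : Y, (y : ℝ) * p (y, a, g₁, g₂, b₂))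
          - h g₁ g₂ b₂ * m2 p a g₁ g₂ b₂ * ∑ y : Y, p (y, a, g₁, g₂, b₂) := by
        rw [← Finset.mul_sum, ← Finset.mul_sum]
    _ = 0 := by
        rw [sum_y_m2 p hpos a g₁ g₂ b₂]
        unfold pAG1G2B2
        ring

lemma E_ind (a : A) (e : G₁ → G₂ → B₂ → ℝ) :
    ∑ o : Y × A × G₁ × G₂ × B₂, (if o.2.1 = a then (1 : ℝ) else 0)
        * (p o * e o.2.2.1 o.2.2.2.1 o.2.2.2.2)
      = ∑ g₁ : G₁, ∑ g₂ : G₂, ∑ b₂ : B₂, pAG1G2B2 p a g₁ g₂ b₂ * e g₁ g₂ b₂ := by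
  rw [E_collapse, sum_rot4]
  dsimp only
  refine Finset.sum_congr rfl fun g₁ _ => Finset.sum_congr rfl fun g₂ _ =>
    Finset.sum_congr rfl fun b₂ _ => ?_
  rw [← Finset.sum_mul]
  rfl

lemma E_fn (e : G₁ → G₂ → B₂ → ℝ) :
    ∑ o : Y × A × G₁ × G₂ × B₂, p o * e o.2.2.1 o.2.2.2.1 o.2.2.2.2
      = ∑ g₁ : G₁, ∑ g₂ : G₂, ∑ b₂ : B₂, pJm p g₁ g₂ b₂ * e g₁ g₂ b₂ := by
  have h1 : (∑ o : Y × A × G₁ × G₂ × B₂, p o * e o.2.2.1 o.2.2.2.1 o.2.2.2.2)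
      = ∑ y : Y, ∑ a' : A, ∑ g₁ : G₁, ∑ g₂ : G₂, ∑ b₂ : B₂,
          p (y, a', g₁, g₂, b₂) * e g₁ g₂ b₂ := by
    simp only [Fintype.sum_prod_type]
  rw [h1, sum_reorder5]
  refine Finset.sum_congr rfl fun g₁ _ => Finset.sum_congr rfl fun g₂ _ =>
    Finset.sum_congr rfl fun b₂ _ => ?_
  calc ∑ y : Y, ∑ a' : A, p (y, a', g₁, g₂, b₂) * e g₁ g₂ b₂
      = ∑ y : Y, (∑ a' : A, p (y, a', g₁, g₂, b₂)) * e g₁ g₂ b₂ :=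
        Finset.sum_congr rfl fun y _ => (Finset.sum_mul _ _ _).symm
    _ = pJm p g₁ g₂ b₂ * e g₁ g₂ b₂ := (Finset.sum_mul _ _ _).symm

lemma E_g1 (c : G₁ → ℝ) :
    ∑ o : Y × A × G₁ × G₂ × B₂, p o * c o.2.2.1 = ∑ g₁ : G₁, pG1 p g₁ * c g₁ := by
  rw [E_fn p (fun g₁ _ _ => c g₁)]
  refine Finset.sum_congr rfl fun g₁ _ => ?_
  rw [← sum_g2b2_pJm p g₁, Finset.sum_mul]
  exact Finset.sum_congr rfl fun g₂ _ => (Finset.sum_mul _ _ _).symm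

lemma E_g2b2 (d : G₂ → B₂ → ℝ) :
    ∑ o : Y × A × G₁ × G₂ × B₂, p o * d o.2.2.2.1 o.2.2.2.2
      = ∑ g₂ : G₂, ∑ b₂ : B₂, pG2B2 p g₂ b₂ * d g₂ b₂ := by
  rw [E_fn p (fun _ g₂ b₂ => d g₂ b₂), sum_rot3]
  refine Finset.sum_congr rfl fun g₂ _ => Finset.sum_congr rfl fun b₂ _ => ?_
  rw [← sum_g1_pJm p g₂ b₂, Finset.sum_mul]

lemma E_const (hsum : ∑ o, p o = 1) (c : ℝ) :
    ∑ o : Y × A × G₁ × G₂ × B₂, p o * c = c := by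
  rw [← Finset.sum_mul, hsum, one_mul]

/-! ### Mean zero of `psi2` -/

lemma sum_pG1_ccf (a : A) : ∑ g₁ : G₁, pG1 p g₁ * ccf p a g₁ = T2 p a := rfl

lemma sum_pG2B2_ddf (a : A) :
    ∑ g₂ : G₂, ∑ b₂ : B₂, pG2B2 p g₂ b₂ * ddf p a g₂ b₂ = T2 p a := by
  unfold ddf T2
  calc ∑ g₂ : G₂, ∑ b₂ : B₂, pG2B2 p g₂ b₂ * ∑ g₁ : G₁, pG1 p g₁ * m2 p a g₁ g₂ b₂
      = ∑ g₂ : G₂, ∑ b₂ : B₂, ∑ g₁ : G₁,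
          pG1 p g₁ * (pG2B2 p g₂ b₂ * m2 p a g₁ g₂ b₂) := by
        refine Finset.sum_congr rfl fun g₂ _ => Finset.sum_congr rfl fun b₂ _ => ?_
        rw [Finset.mul_sum]
        exact Finset.sum_congr rfl fun g₁ _ => by ring
    _ = ∑ g₁ : G₁, ∑ g₂ : G₂, ∑ b₂ : B₂,
          pG1 p g₁ * (pG2B2 p g₂ b₂ * m2 p a g₁ g₂ b₂) :=
        (sum_rot3 fun g₁ g₂ b₂ => pG1 p g₁ * (pG2B2 p g₂ b₂ * m2 p a g₁ g₂ b₂)).symm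
    _ = ∑ g₁ : G₁, pG1 p g₁ * ∑ g₂ : G₂, ∑ b₂ : B₂, pG2B2 p g₂ b₂ * m2 p a g₁ g₂ b₂ := by
        refine Finset.sum_congr rfl fun g₁ _ => ?_
        rw [Finset.mul_sum]
        exact Finset.sum_congr rfl fun g₂ _ => by rw [Finset.mul_sum]

lemma Epsi2 (hpos : ∀ o, 0 < p o) (hsum : ∑ o, p o = 1) (a : A) :
    ∑ o : Y × A × G₁ × G₂ × B₂,
      p o * psi2 p a o.1 o.2.1 o.2.2.1 o.2.2.2.1 o.2.2.2.2 = 0 := by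
  calc ∑ o : Y × A × G₁ × G₂ × B₂, p o * psi2 p a o.1 o.2.1 o.2.2.1 o.2.2.2.1 o.2.2.2.2
      = ∑ o : Y × A × G₁ × G₂ × B₂,
          ((if o.2.1 = a then (1 : ℝ) else 0)
              * (p o * ((pG1 p o.2.2.1 * pG2B2 p o.2.2.2.1 o.2.2.2.2
                    / pAG1G2B2 p a o.2.2.1 o.2.2.2.1 o.2.2.2.2)
                  * ((o.1 : ℝ) - m2 p a o.2.2.1 o.2.2.2.1 o.2.2.2.2)))
            + (p o * ccf p a o.2.2.1
            + (p o * ddf p a o.2.2.2.1 o.2.2.2.2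
            + p o * (-(2 * T2 p a))))) := by
        refine Finset.sum_congr rfl fun o _ => ?_
        unfold psi2 ccf ddf
        ring
    _ = 0 := by
        rw [Finset.sum_add_distrib, Finset.sum_add_distrib, Finset.sum_add_distrib,
          E_ind_y p hpos a (fun g₁ g₂ b₂ => pG1 p g₁ * pG2B2 p g₂ b₂ / pAG1G2B2 p a g₁ g₂ b₂), E_g1 p (ccf p a), E_g2b2 p (ddf p a),
          E_const p hsum (-(2 * T2 p a)), sum_pG1_ccf p a, sum_pG2B2_ddf p a]
        ring

/-! ### Orthogonality of `psi2` and `psi1 - psi2` -/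

lemma F1inner (hpos : ∀ o, 0 < p o) (hCI : CI_G2_AG1_B2 p) (a : A) (g₁ : G₁) (b₂ : B₂) :
    ∑ g₂ : G₂, pG2B2 p g₂ b₂ * (m2 p a g₁ g₂ b₂ - m1 p a g₁ b₂) = 0 := by
  calc ∑ g₂ : G₂, pG2B2 p g₂ b₂ * (m2 p a g₁ g₂ b₂ - m1 p a g₁ b₂)
      = (∑ g₂ : G₂, pG2B2 p g₂ b₂ * m2 p a g₁ g₂ b₂)
          - ∑ g₂ : G₂, pG2B2 p g₂ b₂ * m1 p a g₁ b₂ := by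
        rw [← Finset.sum_sub_distrib]
        exact Finset.sum_congr rfl fun g₂ _ => mul_sub _ _ _
    _ = pB2 p b₂ * m1 p a g₁ b₂ - (∑ g₂ : G₂, pG2B2 p g₂ b₂) * m1 p a g₁ b₂ := by
        rw [← m1_pB2 p hpos hCI a g₁ b₂, Finset.sum_mul]
    _ = 0 := by rw [sum_g2_pG2B2]; ring

lemma F1 (hpos : ∀ o, 0 < p o) (hCI : CI_G2_AG1_B2 p) (a : A) (g₁ : G₁) :
    ∑ g₂ : G₂, ∑ b₂ : B₂, pG2B2 p g₂ b₂ * (m2 p a g₁ g₂ b₂ - m1 p a g₁ b₂) = 0 := by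
  rw [Finset.sum_comm]
  exact Finset.sum_eq_zero fun b₂ _ => F1inner p hpos hCI a g₁ b₂

lemma F3 (hpos : ∀ o, 0 < p o) (hCI : CI_G2_AG1_B2 p) (a : A) (b₂ : B₂) :
    ∑ g₂ : G₂, pG2B2 p g₂ b₂ * Ddf p a g₂ b₂ = 0 := by
  calc ∑ g₂ : G₂, pG2B2 p g₂ b₂ * Ddf p a g₂ b₂
      = ∑ g₂ : G₂, ∑ g₁ : G₁,
          (-(pG1 p g₁)) * (pG2B2 p g₂ b₂ * (m2 p a g₁ g₂ b₂ - m1 p a g₁ b₂)) := by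
        refine Finset.sum_congr rfl fun g₂ _ => ?_
        unfold Ddf
        rw [Finset.mul_sum]
        exact Finset.sum_congr rfl fun g₁ _ => by ring
    _ = ∑ g₁ : G₁, ∑ g₂ : G₂,
          (-(pG1 p g₁)) * (pG2B2 p g₂ b₂ * (m2 p a g₁ g₂ b₂ - m1 p a g₁ b₂)) :=
        Finset.sum_comm
    _ = 0 := by
        refine Finset.sum_eq_zero fun g₁ _ => ?_
        rw [← Finset.mul_sum, F1inner p hpos hCI a g₁ b₂, mul_zero]

lemma hDneg (a : A) (g₂ : G₂) (b₂ : B₂) :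
    ∑ g₁ : G₁, pG1 p g₁ * (m2 p a g₁ g₂ b₂ - m1 p a g₁ b₂) = - Ddf p a g₂ b₂ := by
  unfold Ddf
  rw [← Finset.sum_neg_distrib]
  exact Finset.sum_congr rfl fun g₁ _ => by ring

lemma hfact2 (K : ℝ) (F : G₂ → B₂ → ℝ) :
    ∑ g₂ : G₂, ∑ b₂ : B₂, K * F g₂ b₂ = K * ∑ g₂ : G₂, ∑ b₂ : B₂, F g₂ b₂ := by
  rw [Finset.mul_sum]
  exact Finset.sum_congr rfl fun g₂ _ => by rw [Finset.mul_sum]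

lemma S3_eq (hpos : ∀ o, 0 < p o) (hCI : CI_G2_AG1_B2 p) (a : A) :
    (∑ g₁ : G₁, ∑ g₂ : G₂, ∑ b₂ : B₂, pAG1G2B2 p a g₁ g₂ b₂ *
        ((pG1 p g₁ * pG2B2 p g₂ b₂ / pAG1G2B2 p a g₁ g₂ b₂)
          * ((m2 p a g₁ g₂ b₂ - m1 p a g₁ b₂)
            * (ccf p a g₁ + ddf p a g₂ b₂ - 2 * T2 p a))))
      = - ∑ g₂ : G₂, ∑ b₂ : B₂, pG2B2 p g₂ b₂ * (Ddf p a g₂ b₂ * ddf p a g₂ b₂) := by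
  calc (∑ g₁ : G₁, ∑ g₂ : G₂, ∑ b₂ : B₂, pAG1G2B2 p a g₁ g₂ b₂ *
        ((pG1 p g₁ * pG2B2 p g₂ b₂ / pAG1G2B2 p a g₁ g₂ b₂)
          * ((m2 p a g₁ g₂ b₂ - m1 p a g₁ b₂)
            * (ccf p a g₁ + ddf p a g₂ b₂ - 2 * T2 p a))))
      = ∑ g₁ : G₁, ∑ g₂ : G₂, ∑ b₂ : B₂,
          ((pG1 p g₁ * (ccf p a g₁ - 2 * T2 p a))
              * (pG2B2 p g₂ b₂ * (m2 p a g₁ g₂ b₂ - m1 p a g₁ b₂))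
            + (pG1 p g₁ * (m2 p a g₁ g₂ b₂ - m1 p a g₁ b₂))
              * (pG2B2 p g₂ b₂ * ddf p a g₂ b₂)) := by
        refine Finset.sum_congr rfl fun g₁ _ => Finset.sum_congr rfl fun g₂ _ =>
          Finset.sum_congr rfl fun b₂ _ => ?_
        have hq := (pAG1G2B2_pos p hpos a g₁ g₂ b₂).ne'
        field_simp
        ring
    _ = ∑ g₁ : G₁,
          ((pG1 p g₁ * (ccf p a g₁ - 2 * T2 p a))
              * (∑ g₂ : G₂, ∑ b₂ : B₂, pG2B2 p g₂ b₂ * (m2 p a g₁ g₂ b₂ - m1 p a g₁ b₂))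
            + ∑ g₂ : G₂, ∑ b₂ : B₂, (pG1 p g₁ * (m2 p a g₁ g₂ b₂ - m1 p a g₁ b₂))
              * (pG2B2 p g₂ b₂ * ddf p a g₂ b₂)) := by
        refine Finset.sum_congr rfl fun g₁ _ => ?_
        rw [← hfact2 (pG1 p g₁ * (ccf p a g₁ - 2 * T2 p a))
          (fun g₂ b₂ => pG2B2 p g₂ b₂ * (m2 p a g₁ g₂ b₂ - m1 p a g₁ b₂)),
          ← Finset.sum_add_distrib]
        exact Finset.sum_congr rfl fun g₂ _ => Finset.sum_add_distrib
    _ = ∑ g₁ : G₁, ∑ g₂ : G₂, ∑ b₂ : B₂, (pG1 p g₁ * (m2 p a g₁ g₂ b₂ - m1 p a g₁ b₂))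
              * (pG2B2 p g₂ b₂ * ddf p a g₂ b₂) := by
        refine Finset.sum_congr rfl fun g₁ _ => ?_
        rw [F1 p hpos hCI a g₁, mul_zero, zero_add]
    _ = ∑ g₂ : G₂, ∑ b₂ : B₂, ∑ g₁ : G₁, (pG1 p g₁ * (m2 p a g₁ g₂ b₂ - m1 p a g₁ b₂))
              * (pG2B2 p g₂ b₂ * ddf p a g₂ b₂) :=
        sum_rot3 _
    _ = - ∑ g₂ : G₂, ∑ b₂ : B₂, pG2B2 p g₂ b₂ * (Ddf p a g₂ b₂ * ddf p a g₂ b₂) := by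
        rw [← Finset.sum_neg_distrib]
        refine Finset.sum_congr rfl fun g₂ _ => ?_
        rw [← Finset.sum_neg_distrib]
        refine Finset.sum_congr rfl fun b₂ _ => ?_
        rw [← Finset.sum_mul, hDneg p a g₂ b₂]
        ring

lemma pJm_eq (hpos : ∀ o, 0 < p o) (hCI : CI_G2_AG1_B2 p) (g₁ : G₁) (g₂ : G₂) (b₂ : B₂) :
    pJm p g₁ g₂ b₂ = pG2B2 p g₂ b₂ * pG1B2m p g₁ b₂ / pB2 p b₂ := by
  rw [eq_div_iff (pB2_pos p hpos b₂).ne']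
  exact pJm_CI p hpos hCI g₁ g₂ b₂

lemma S4_eq (hpos : ∀ o, 0 < p o) (hCI : CI_G2_AG1_B2 p) (a : A) :
    (∑ g₁ : G₁, ∑ g₂ : G₂, ∑ b₂ : B₂, pJm p g₁ g₂ b₂ *
        (Ddf p a g₂ b₂ * (ccf p a g₁ + ddf p a g₂ b₂ - 2 * T2 p a)))
      = ∑ g₂ : G₂, ∑ b₂ : B₂, pG2B2 p g₂ b₂ * (Ddf p a g₂ b₂ * ddf p a g₂ b₂) := by
  calc (∑ g₁ : G₁, ∑ g₂ : G₂, ∑ b₂ : B₂, pJm p g₁ g₂ b₂ *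
        (Ddf p a g₂ b₂ * (ccf p a g₁ + ddf p a g₂ b₂ - 2 * T2 p a)))
      = ∑ b₂ : B₂, ∑ g₂ : G₂, ∑ g₁ : G₁, pJm p g₁ g₂ b₂ *
          (Ddf p a g₂ b₂ * (ccf p a g₁ + ddf p a g₂ b₂ - 2 * T2 p a)) :=
        sum_rev3 _
    _ = ∑ b₂ : B₂, ∑ g₂ : G₂,
          ((pG2B2 p g₂ b₂ * Ddf p a g₂ b₂)
              * ((∑ g₁ : G₁, pG1B2m p g₁ b₂ * (ccf p a g₁ - 2 * T2 p a)) / pB2 p b₂)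
            + (pG2B2 p g₂ b₂ * (Ddf p a g₂ b₂ * ddf p a g₂ b₂) / pB2 p b₂)
              * ∑ g₁ : G₁, pG1B2m p g₁ b₂) := by
        refine Finset.sum_congr rfl fun b₂ _ => Finset.sum_congr rfl fun g₂ _ => ?_
        calc ∑ g₁ : G₁, pJm p g₁ g₂ b₂ *
              (Ddf p a g₂ b₂ * (ccf p a g₁ + ddf p a g₂ b₂ - 2 * T2 p a))
            = ∑ g₁ : G₁,
                ((pG2B2 p g₂ b₂ * Ddf p a g₂ b₂ / pB2 p b₂)
                    * (pG1B2m p g₁ b₂ * (ccf p a g₁ - 2 * T2 p a))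
                  + (pG2B2 p g₂ b₂ * (Ddf p a g₂ b₂ * ddf p a g₂ b₂) / pB2 p b₂)
                    * pG1B2m p g₁ b₂) := by
              refine Finset.sum_congr rfl fun g₁ _ => ?_
              rw [pJm_eq p hpos hCI g₁ g₂ b₂]
              ring
          _ = (pG2B2 p g₂ b₂ * Ddf p a g₂ b₂ / pB2 p b₂)
                  * (∑ g₁ : G₁, pG1B2m p g₁ b₂ * (ccf p a g₁ - 2 * T2 p a))
                + (pG2B2 p g₂ b₂ * (Ddf p a g₂ b₂ * ddf p a g₂ b₂) / pB2 p b₂)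
                  * ∑ g₁ : G₁, pG1B2m p g₁ b₂ := by
              rw [Finset.sum_add_distrib, ← Finset.mul_sum, ← Finset.mul_sum]
          _ = (pG2B2 p g₂ b₂ * Ddf p a g₂ b₂)
                  * ((∑ g₁ : G₁, pG1B2m p g₁ b₂ * (ccf p a g₁ - 2 * T2 p a)) / pB2 p b₂)
                + (pG2B2 p g₂ b₂ * (Ddf p a g₂ b₂ * ddf p a g₂ b₂) / pB2 p b₂)
                  * ∑ g₁ : G₁, pG1B2m p g₁ b₂ := by
              ring
    _ = ∑ b₂ : B₂, ∑ g₂ : G₂, pG2B2 p g₂ b₂ * (Ddf p a g₂ b₂ * ddf p a g₂ b₂) := by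
        refine Finset.sum_congr rfl fun b₂ _ => ?_
        rw [Finset.sum_add_distrib, ← Finset.sum_mul, F3 p hpos hCI a b₂, zero_mul, zero_add,
          sum_g1_pG1B2m p b₂]
        refine Finset.sum_congr rfl fun g₂ _ => ?_
        rw [div_mul_cancel₀ _ (pB2_pos p hpos b₂).ne']
    _ = ∑ g₂ : G₂, ∑ b₂ : B₂, pG2B2 p g₂ b₂ * (Ddf p a g₂ b₂ * ddf p a g₂ b₂) :=
        Finset.sum_comm

lemma Ecross (hpos : ∀ o, 0 < p o) (hCI : CI_G2_AG1_B2 p) (a : A) :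
    ∑ o : Y × A × G₁ × G₂ × B₂,
      p o * (psi2 p a o.1 o.2.1 o.2.2.1 o.2.2.2.1 o.2.2.2.2
        * (psi1 p a o.1 o.2.1 o.2.2.1 o.2.2.2.2
            - psi2 p a o.1 o.2.1 o.2.2.1 o.2.2.2.1 o.2.2.2.2)) = 0 := by
  calc ∑ o : Y × A × G₁ × G₂ × B₂,
      p o * (psi2 p a o.1 o.2.1 o.2.2.1 o.2.2.2.1 o.2.2.2.2
        * (psi1 p a o.1 o.2.1 o.2.2.1 o.2.2.2.2
            - psi2 p a o.1 o.2.1 o.2.2.1 o.2.2.2.1 o.2.2.2.2))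
      = ∑ o : Y × A × G₁ × G₂ × B₂,
          ((if o.2.1 = a then (1 : ℝ) else 0)
              * (p o * (((pG1 p o.2.2.1 * pG2B2 p o.2.2.2.1 o.2.2.2.2
                      / pAG1G2B2 p a o.2.2.1 o.2.2.2.1 o.2.2.2.2)
                    * (pG1 p o.2.2.1 * pG2B2 p o.2.2.2.1 o.2.2.2.2
                      / pAG1G2B2 p a o.2.2.1 o.2.2.2.1 o.2.2.2.2)
                    * (m2 p a o.2.2.1 o.2.2.2.1 o.2.2.2.2 - m1 p a o.2.2.1 o.2.2.2.2))
                  * ((o.1 : ℝ) - m2 p a o.2.2.1 o.2.2.2.1 o.2.2.2.2)))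
            + ((if o.2.1 = a then (1 : ℝ) else 0)
              * (p o * (((pG1 p o.2.2.1 * pG2B2 p o.2.2.2.1 o.2.2.2.2
                      / pAG1G2B2 p a o.2.2.1 o.2.2.2.1 o.2.2.2.2)
                    * Ddf p a o.2.2.2.1 o.2.2.2.2)
                  * ((o.1 : ℝ) - m2 p a o.2.2.1 o.2.2.2.1 o.2.2.2.2)))
            + ((if o.2.1 = a then (1 : ℝ) else 0)
              * (p o * ((pG1 p o.2.2.1 * pG2B2 p o.2.2.2.1 o.2.2.2.2
                      / pAG1G2B2 p a o.2.2.1 o.2.2.2.1 o.2.2.2.2)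
                  * ((m2 p a o.2.2.1 o.2.2.2.1 o.2.2.2.2 - m1 p a o.2.2.1 o.2.2.2.2)
                    * (ccf p a o.2.2.1 + ddf p a o.2.2.2.1 o.2.2.2.2 - 2 * T2 p a))))
            + p o * (Ddf p a o.2.2.2.1 o.2.2.2.2
                * (ccf p a o.2.2.1 + ddf p a o.2.2.2.1 o.2.2.2.2 - 2 * T2 p a))))) := by
        refine Finset.sum_congr rfl fun o _ => ?_
        rw [psi_diff p hpos hCI a o.1 o.2.1 o.2.2.1 o.2.2.2.1 o.2.2.2.2]
        unfold psi2 ccf ddf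
        by_cases hA : o.2.1 = a
        · simp only [hA, eq_self_iff_true, if_true]
          ring
        · simp only [if_neg hA]
          ring
    _ = 0 := by
        rw [Finset.sum_add_distrib, Finset.sum_add_distrib, Finset.sum_add_distrib,
          E_ind_y p hpos a (fun g₁ g₂ b₂ =>
            (pG1 p g₁ * pG2B2 p g₂ b₂ / pAG1G2B2 p a g₁ g₂ b₂)
              * (pG1 p g₁ * pG2B2 p g₂ b₂ / pAG1G2B2 p a g₁ g₂ b₂)
              * (m2 p a g₁ g₂ b₂ - m1 p a g₁ b₂)),
          E_ind_y p hpos a (fun g₁ g₂ b₂ =>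
            (pG1 p g₁ * pG2B2 p g₂ b₂ / pAG1G2B2 p a g₁ g₂ b₂) * Ddf p a g₂ b₂),
          E_ind p a (fun g₁ g₂ b₂ =>
            (pG1 p g₁ * pG2B2 p g₂ b₂ / pAG1G2B2 p a g₁ g₂ b₂)
              * ((m2 p a g₁ g₂ b₂ - m1 p a g₁ b₂)
                * (ccf p a g₁ + ddf p a g₂ b₂ - 2 * T2 p a))),
          E_fn p (fun g₁ g₂ b₂ =>
            Ddf p a g₂ b₂ * (ccf p a g₁ + ddf p a g₂ b₂ - 2 * T2 p a)),
          S3_eq p hpos hCI a, S4_eq p hpos hCI a]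
        ring

/-! ### Variance lemmas -/

lemma VarP_nonneg (hpos : ∀ o, 0 < p o) (hsum : ∑ o, p o = 1)
    (f : Y × A × G₁ × G₂ × B₂ → ℝ) : 0 ≤ VarP p f := by
  have key : ∑ o : Y × A × G₁ × G₂ × B₂,
      p o * (f o - ∑ o' : Y × A × G₁ × G₂ × B₂, p o' * f o') ^ 2 = VarP p f := by
    unfold VarP
    calc ∑ o : Y × A × G₁ × G₂ × B₂,
          p o * (f o - ∑ o' : Y × A × G₁ × G₂ × B₂, p o' * f o') ^ 2
        = ∑ o : Y × A × G₁ × G₂ × B₂,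
            (p o * f o ^ 2
              - 2 * (∑ o' : Y × A × G₁ × G₂ × B₂, p o' * f o') * (p o * f o)
              + (∑ o' : Y × A × G₁ × G₂ × B₂, p o' * f o') ^ 2 * p o) :=
          Finset.sum_congr rfl fun o _ => by ring
      _ = (∑ o : Y × A × G₁ × G₂ × B₂, p o * f o ^ 2)
            - 2 * (∑ o' : Y × A × G₁ × G₂ × B₂, p o' * f o')
                * (∑ o : Y × A × G₁ × G₂ × B₂, p o * f o)
            + (∑ o' : Y × A × G₁ × G₂ × B₂, p o' * f o') ^ 2
                * (∑ o : Y × A × G₁ × G₂ × B₂, p o) := by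
          rw [Finset.sum_add_distrib, Finset.sum_sub_distrib, ← Finset.mul_sum,
            ← Finset.mul_sum]
      _ = (∑ o : Y × A × G₁ × G₂ × B₂, p o * f o ^ 2)
            - (∑ o : Y × A × G₁ × G₂ × B₂, p o * f o) ^ 2 := by
          rw [hsum]; ring
  rw [← key]
  exact Finset.sum_nonneg fun o _ => mul_nonneg (hpos o).le (sq_nonneg _)

lemma VarP_decomp (f g : Y × A × G₁ × G₂ × B₂ → ℝ)
    (hg0 : ∑ o : Y × A × G₁ × G₂ × B₂, p o * g o = 0)
    (hcross : ∑ o : Y × A × G₁ × G₂ × B₂, p o * (g o * (f o - g o)) = 0) :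
    VarP p f = VarP p g + VarP p (fun o => f o - g o) := by
  have h1 : ∑ o : Y × A × G₁ × G₂ × B₂, p o * f o ^ 2
      = (∑ o : Y × A × G₁ × G₂ × B₂, p o * g o ^ 2)
        + (∑ o : Y × A × G₁ × G₂ × B₂, p o * (f o - g o) ^ 2)
        + 2 * ∑ o : Y × A × G₁ × G₂ × B₂, p o * (g o * (f o - g o)) := by
    rw [Finset.mul_sum, ← Finset.sum_add_distrib, ← Finset.sum_add_distrib]
    exact Finset.sum_congr rfl fun o _ => by ring
  have h2 : ∑ o : Y × A × G₁ × G₂ × B₂, p o * f o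
      = (∑ o : Y × A × G₁ × G₂ × B₂, p o * g o)
        + ∑ o : Y × A × G₁ × G₂ × B₂, p o * (f o - g o) := by
    rw [← Finset.sum_add_distrib]
    exact Finset.sum_congr rfl fun o _ => by ring
  unfold VarP
  rw [h1, h2, hg0, hcross]
  ring
end AuxVDSB
/-- Lemma 4.1 (supplement of backdoor variables), discrete form: under
`G₂ ⊥ (A, G₁) | B₂`, the variance of `ψ_a^{G₁,B₂}` decomposes as the
variance of `ψ_a^{G₁,(G₂,B₂)}` plus the variance of the difference; in
particular the larger adjustment set has no larger asymptotic variance. -/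
theorem variance_decomposition_supplement_backdoor
    (p : Y × A × G₁ × G₂ × B₂ → ℝ)
    (hpos : ∀ o, 0 < p o) (hsum : ∑ o, p o = 1) (a : A)
    (hCI : CI_G2_AG1_B2 p) :
    (VarP p (fun o => psi1 p a o.1 o.2.1 o.2.2.1 o.2.2.2.2) =
      VarP p (fun o => psi2 p a o.1 o.2.1 o.2.2.1 o.2.2.2.1 o.2.2.2.2) +
        VarP p (fun o => psi1 p a o.1 o.2.1 o.2.2.1 o.2.2.2.2 -
          psi2 p a o.1 o.2.1 o.2.2.1 o.2.2.2.1 o.2.2.2.2)) ∧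
    VarP p (fun o => psi1 p a o.1 o.2.1 o.2.2.1 o.2.2.2.2) ≥
      VarP p (fun o => psi2 p a o.1 o.2.1 o.2.2.1 o.2.2.2.1 o.2.2.2.2) := by
  have hne : Nonempty (Y × A × G₁ × G₂ × B₂) := by
    by_contra h
    rw [not_nonempty_iff] at h
    rw [Finset.univ_eq_empty, Finset.sum_empty] at hsum
    exact one_ne_zero hsum.symm
  obtain ⟨⟨y0, a0, g10, g20, b20⟩⟩ := hne
  haveI : Nonempty Y := ⟨y0⟩
  haveI : Nonempty A := ⟨a0⟩
  haveI : Nonempty G₁ := ⟨g10⟩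
  haveI : Nonempty G₂ := ⟨g20⟩
  haveI : Nonempty B₂ := ⟨b20⟩
  have hg0 := Epsi2 p hpos hsum a
  have hcross := Ecross p hpos hCI a
  have hdec := VarP_decomp p (fun o => psi1 p a o.1 o.2.1 o.2.2.1 o.2.2.2.2)
    (fun o => psi2 p a o.1 o.2.1 o.2.2.1 o.2.2.2.1 o.2.2.2.2) hg0 hcross
  have hnn := VarP_nonneg p hpos hsum
    (fun o => psi1 p a o.1 o.2.1 o.2.2.1 o.2.2.2.2
      - psi2 p a o.1 o.2.1 o.2.2.1 o.2.2.2.1 o.2.2.2.2)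
  exact ⟨hdec, by linarith⟩
end
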